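/- arXiv:2012.05204 — 2 statements merged into one kernel-verified Lean document; each statement's English description precedes it below -/
import Mathlib

section
/- For dyadic rationals x < y in (0,1) and a W-continuous solution v of the dyadic self-similarity equation with operators A₀, A₁ of joint spectral radius ρ < 1, one has ‖v(y) − v(x)‖ ≤ C · |y ⊖ x|^{−log₂(ρ + ε)} for every ε > 0 with ρ + ε < 1 and a constant C depending only on A₀, A₁, ε. -/
/-- The `n`-th binary digit of a nonnegative real `x` (digit of weight `2^n`). -/
noncomputable def rbit (x : ℝ) (n : ℤ) : ℕ := ⌊x / (2 : ℝ) ^ n⌋.toNat % 2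

/-- Dyadic (carry-free, digitwise XOR) addition on the dyadic half-line `ℝ₊`;
since `⊕` is an involution it coincides with dyadic subtraction `⊖`. -/
noncomputable def dAdd (x y : ℝ) : ℝ :=
  ∑' n : ℤ, (((rbit x n) ^^^ (rbit y n) : ℕ) : ℝ) * (2 : ℝ) ^ n

/-- The product of operators along a word of `Bool`s
(`false` choosing `A₀`, `true` choosing `A₁`). -/
noncomputable def wordProd {E : Type*} [NormedAddCommGroup E] [NormedSpace ℝ E]
    (A₀ A₁ : E →L[ℝ] E) (w : List Bool) : E →L[ℝ] E :=
  w.foldr (fun b acc => (cond b A₁ A₀).comp acc) (ContinuousLinearMap.id ℝ E)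

/-- The joint spectral radius of two operators,
`ρ = lim_{r→∞} max_{(d₁,…,d_r)} ‖A_{d₁} ⋯ A_{d_r}‖^{1/r}`; by Fekete's lemma
this limit equals the infimum over `r`. -/
noncomputable def jsr {E : Type*} [NormedAddCommGroup E] [NormedSpace ℝ E]
    (A₀ A₁ : E →L[ℝ] E) : ℝ :=
  ⨅ r : ℕ, ⨆ w : Fin (r + 1) → Bool,
    ‖wordProd A₀ A₁ (List.ofFn w)‖ ^ (((r : ℝ) + 1)⁻¹)

/-- The joint spectral radius of two affine operators: the joint spectral
radius of their linear parts. -/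
noncomputable def jsrAff {N : ℕ}
    (A₀ A₁ : (Fin N → ℝ) →ᵃ[ℝ] (Fin N → ℝ)) : ℝ :=
  jsr (LinearMap.toContinuousLinearMap A₀.linear)
    (LinearMap.toContinuousLinearMap A₁.linear)

/-- The dyadic self-similarity equation for `v : [0,1] → ℝ^N`:
`v(t) = A₀ v(2t)` on `[0, 1/2)` and `v(t) = A₁ v(2t ⊖ 1)` on `[1/2, 1]`. -/
def SelfSim {N : ℕ} (A₀ A₁ : (Fin N → ℝ) →ᵃ[ℝ] (Fin N → ℝ))
    (v : ℝ → (Fin N → ℝ)) : Prop :=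
  (∀ t : ℝ, 0 ≤ t → t < 1 / 2 → v t = A₀ (v (2 * t))) ∧
  (∀ t : ℝ, 1 / 2 ≤ t → t ≤ 1 → v t = A₁ (v (dAdd (2 * t) 1)))

/-- `W`-continuity (dyadic continuity) of a vector-valued function on `[0,1]`. -/
def WContV {N : ℕ} (v : ℝ → (Fin N → ℝ)) : Prop :=
  ∀ x : ℝ, 0 ≤ x → x ≤ 1 → ∀ ε : ℝ, 0 < ε → ∃ δ : ℝ, 0 < δ ∧
    ∀ h : ℝ, 0 ≤ h → h < δ → dAdd x h ≤ 1 → ‖v (dAdd x h) - v x‖ < ε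

/-- `v` has dyadic Hölder regularity of exponent `α` on `[0,1]`: its dyadic
modulus of continuity satisfies `w(v, δ) ≤ C δ^α`. -/
def DyadicHolderWith {N : ℕ} (v : ℝ → (Fin N → ℝ)) (α : ℝ) : Prop :=
  ∃ C : ℝ, ∀ x : ℝ, 0 ≤ x → x ≤ 1 → ∀ y : ℝ, 0 ≤ y → dAdd x y ≤ 1 →
    ‖v (dAdd x y) - v x‖ ≤ C * y ^ α

/-- A real number is dyadic rational. -/
def DyadicRat (x : ℝ) : Prop := ∃ a b : ℕ, x = (a : ℝ) / 2 ^ b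


section Aux

lemma nat_bits_sum : ∀ (M e : ℕ), e < 2 ^ M → ∑ m ∈ Finset.range M, (e / 2 ^ m % 2) * 2 ^ m = e := by
  intro M
  induction M with
  | zero => intro e he; interval_cases e; simp
  | succ M ih =>
    intro e he
    rw [Finset.sum_range_succ']
    have h1 : ∀ m, e / 2 ^ (m + 1) % 2 * 2 ^ (m + 1) = 2 * ((e / 2) / 2 ^ m % 2 * 2 ^ m) := by
      intro m
      have : e / 2 ^ (m+1) = e / 2 / 2 ^ m := by
        rw [Nat.div_div_eq_div_mul, pow_succ']
      rw [this, pow_succ]; ring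
    simp only [h1]
    rw [← Finset.mul_sum, ih (e / 2) (Nat.div_lt_of_lt_mul (by rw [← pow_succ'] ; omega))]
    simp [Nat.div_add_mod, Nat.add_comm]
    omega

lemma rbit_dyadic (a b : ℕ) (n : ℤ) :
    rbit ((a : ℝ) / 2 ^ b) n =
      if 0 ≤ n + b then a / 2 ^ ((n + b).toNat) % 2 else 0 := by
  unfold rbit
  rw [Int.floor_toNat]
  have h2 : ((a : ℝ) / 2 ^ b) / (2:ℝ) ^ n = (a : ℝ) / 2 ^ ((b : ℤ) + n) := by
    rw [zpow_add₀ (by norm_num : (2:ℝ) ≠ 0), zpow_natCast]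
    rw [div_div]
  rw [h2]
  split
  · rename_i h
    have : (b : ℤ) + n = ((n + b).toNat : ℤ) := by omega
    rw [this, zpow_natCast]
    rw [← Nat.cast_ofNat (n := 2), ← Nat.cast_pow, Nat.floor_div_eq_div]
  · rename_i h
    have : (b : ℤ) + n = -(((-(n + b)).toNat : ℤ)) := by omega
    rw [this, zpow_neg, div_inv_eq_mul, zpow_natCast]
    rw [← Nat.cast_ofNat (n := 2), ← Nat.cast_pow, ← Nat.cast_mul, Nat.floor_natCast]
    have h3 : 1 ≤ (-(n+b)).toNat := by omega
    rw [Nat.mul_mod, Nat.pow_mod]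
    norm_num
    rw [Nat.zero_pow (by omega)]
    simp

lemma div_pow_mod_two (x k : ℕ) : x / 2 ^ k % 2 = (x.testBit k).toNat := by
  rw [Nat.testBit_eq_decide_div_mod_eq]
  rcases Nat.mod_two_eq_zero_or_one (x / 2 ^ k) with h | h <;> simp [h]

lemma bit_xor (a c k : ℕ) : (a / 2 ^ k % 2) ^^^ (c / 2 ^ k % 2) = (a ^^^ c) / 2 ^ k % 2 := by
  rw [div_pow_mod_two, div_pow_mod_two, div_pow_mod_two, Nat.testBit_xor]
  cases a.testBit k <;> cases c.testBit k <;> rfl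

lemma tsum_rbit (e b : ℕ) :
    ∑' n : ℤ, ((rbit ((e : ℝ) / 2 ^ b) n : ℝ) * (2 : ℝ) ^ n) = (e : ℝ) / 2 ^ b := by
  have hinj : Function.Injective (fun m : ℕ => (m : ℤ) - b) := by
    intro x y h; simp only [sub_left_inj, Nat.cast_inj] at h; exact h
  rw [tsum_eq_sum (s := (Finset.range (Nat.size e)).map
      ⟨fun m : ℕ => (m : ℤ) - b, hinj⟩) ?_]
  · rw [Finset.sum_map]
    simp only [Function.Embedding.coeFn_mk]
    have key : ∀ m ∈ Finset.range (Nat.size e),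
        (rbit ((e : ℝ) / 2 ^ b) ((m : ℤ) - b) : ℝ) * (2 : ℝ) ^ ((m : ℤ) - b)
          = ((e / 2 ^ m % 2 * 2 ^ m : ℕ) : ℝ) / 2 ^ b := by
      intro m hm
      rw [rbit_dyadic, if_pos (by omega : (0:ℤ) ≤ (m : ℤ) - b + b)]
      have h1 : (((m : ℤ) - b) + b).toNat = m := by omega
      rw [h1, zpow_sub₀ (by norm_num : (2:ℝ) ≠ 0), zpow_natCast, zpow_natCast]
      push_cast
      ring
    rw [Finset.sum_congr rfl key, ← Finset.sum_div, ← Nat.cast_sum,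
      nat_bits_sum _ e (Nat.lt_size_self e)]
  · intro n hn
    simp only [Finset.mem_map, Finset.mem_range, Function.Embedding.coeFn_mk] at hn
    rw [rbit_dyadic]
    split
    · rename_i h
      have h2 : Nat.size e ≤ (n + b).toNat := by
        by_contra hc
        exact hn ⟨(n + b).toNat, by omega, by omega⟩
      have h3 : e / 2 ^ ((n + b).toNat) = 0 :=
        Nat.div_eq_of_lt (lt_of_lt_of_le (Nat.lt_size_self e)
          (Nat.pow_le_pow_right (by norm_num) h2))
      simp [h3]
    · simp

lemma dAdd_dyadic (a c b : ℕ) :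
    dAdd ((a : ℝ) / 2 ^ b) ((c : ℝ) / 2 ^ b) = ((a ^^^ c : ℕ) : ℝ) / 2 ^ b := by
  unfold dAdd
  have key : ∀ n : ℤ,
      ((rbit ((a : ℝ) / 2 ^ b) n ^^^ rbit ((c : ℝ) / 2 ^ b) n : ℕ) : ℝ) * (2:ℝ) ^ n
        = (rbit (((a ^^^ c : ℕ) : ℝ) / 2 ^ b) n : ℝ) * (2:ℝ) ^ n := by
    intro n
    congr 2
    rw [rbit_dyadic, rbit_dyadic, rbit_dyadic]
    split
    · exact bit_xor a c _
    · rfl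
  rw [tsum_congr key, tsum_rbit]

lemma two_pow_add_xor (m r : ℕ) (h : r < 2 ^ m) : (2 ^ m + r) ^^^ 2 ^ m = r := by
  apply Nat.eq_of_testBit_eq
  intro i
  rw [Nat.testBit_xor]
  rcases lt_trichotomy i m with hi | rfl | hi
  · rw [Nat.testBit_two_pow_add_gt hi, Nat.testBit_two_pow_of_ne (by omega)]
    simp
  · rw [Nat.testBit_two_pow_add_eq, Nat.testBit_two_pow_self,
      Nat.testBit_lt_two_pow h]
    rfl
  · rw [Nat.testBit_lt_two_pow (x := 2 ^ m + r)
      (by calc 2 ^ m + r < 2 ^ (m + 1) := by omega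
            _ ≤ 2 ^ i := Nat.pow_le_pow_right (by norm_num) (by omega)),
      Nat.testBit_two_pow_of_ne (by omega), Nat.testBit_lt_two_pow
      (lt_of_lt_of_le h (Nat.pow_le_pow_right (by norm_num) (by omega)))]
    rfl

lemma mod_xor_mod (a c k : ℕ) : (a % 2 ^ k) ^^^ (c % 2 ^ k) = (a ^^^ c) % 2 ^ k := by
  apply Nat.eq_of_testBit_eq
  intro i
  simp [Nat.testBit_xor, Nat.testBit_mod_two_pow]
  cases Decidable.em (i < k) <;> rename_i h <;> simp [h]

section Steps

variable {N : ℕ} {A₀ A₁ : (Fin N → ℝ) →ᵃ[ℝ] (Fin N → ℝ)} {v : ℝ → (Fin N → ℝ)}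
  (hv : SelfSim A₀ A₁ v)

include hv

lemma step0 (b a : ℕ) (ha : a < 2 ^ b) :
    v ((a : ℝ) / 2 ^ (b + 1)) = A₀ (v ((a : ℝ) / 2 ^ b)) := by
  have h2 : (a : ℝ) / 2 ^ (b + 1) < 1 / 2 := by
    have hc : (a : ℝ) < 2 ^ b := by exact_mod_cast ha
    rw [div_lt_div_iff₀ (by positivity) (by norm_num), pow_succ]
    linarith
  have := hv.1 _ (by positivity) h2
  rw [this]
  congr 2
  rw [pow_succ]
  ring

lemma step1 (b a : ℕ) (ha : a < 2 ^ b) :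
    v (((2 ^ b + a : ℕ) : ℝ) / 2 ^ (b + 1)) = A₁ (v ((a : ℝ) / 2 ^ b)) := by
  have hpow : (0:ℝ) < 2 ^ b := by positivity
  have h1 : (1:ℝ) / 2 ≤ ((2 ^ b + a : ℕ) : ℝ) / 2 ^ (b + 1) := by
    have hc : (0:ℝ) ≤ (a : ℝ) := Nat.cast_nonneg a
    rw [div_le_div_iff₀ (by norm_num) (by positivity), pow_succ]
    push_cast
    linarith
  have h2 : ((2 ^ b + a : ℕ) : ℝ) / 2 ^ (b + 1) ≤ 1 := by
    have hc : (a : ℝ) < 2 ^ b := by exact_mod_cast ha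
    rw [div_le_one (by positivity), pow_succ]
    push_cast
    linarith
  have := hv.2 _ h1 h2
  rw [this]
  congr 2
  have h3 : 2 * (((2 ^ b + a : ℕ) : ℝ) / 2 ^ (b + 1)) = ((2 ^ b + a : ℕ) : ℝ) / 2 ^ b := by
    rw [pow_succ]; ring
  have h4 : (1 : ℝ) = ((2 ^ b : ℕ) : ℝ) / 2 ^ b := by
    push_cast; field_simp
  rw [h3, h4, dAdd_dyadic, two_pow_add_xor b a ha]

end Steps

section Peel

variable {N : ℕ} {A₀ A₁ : (Fin N → ℝ) →ᵃ[ℝ] (Fin N → ℝ)} {v : ℝ → (Fin N → ℝ)}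
  (hv : SelfSim A₀ A₁ v)

include hv

lemma aff_diff (A : (Fin N → ℝ) →ᵃ[ℝ] (Fin N → ℝ)) (p q : Fin N → ℝ) :
    A p - A q = A.linear (p - q) := by
  rw [← vsub_eq_sub, ← vsub_eq_sub, AffineMap.linearMap_vsub]

lemma peel : ∀ j b a c : ℕ, a < 2 ^ b → c < 2 ^ b → j ≤ b → a ^^^ c < 2 ^ (b - j) →
    ∃ w : List Bool, w.length = j ∧
      v ((a : ℝ) / 2 ^ b) - v ((c : ℝ) / 2 ^ b) =
        wordProd (LinearMap.toContinuousLinearMap A₀.linear)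
          (LinearMap.toContinuousLinearMap A₁.linear) w
          (v (((a % 2 ^ (b - j) : ℕ) : ℝ) / 2 ^ (b - j)) -
           v (((c % 2 ^ (b - j) : ℕ) : ℝ) / 2 ^ (b - j))) := by
  intro j
  induction j with
  | zero =>
    intro b a c ha hc _ _
    refine ⟨[], rfl, ?_⟩
    rw [Nat.sub_zero, Nat.mod_eq_of_lt ha, Nat.mod_eq_of_lt hc]
    rfl
  | succ j ih =>
    intro b a c ha hc hj hd
    obtain ⟨b', rfl⟩ : ∃ b', b = b' + 1 := ⟨b - 1, by omega⟩
    -- top bits agree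
    have hsz : a ^^^ c < 2 ^ b' :=
      lt_of_lt_of_le hd (Nat.pow_le_pow_right (by norm_num) (by omega))
    have hbit : a / 2 ^ b' % 2 = c / 2 ^ b' % 2 := by
      rw [div_pow_mod_two, div_pow_mod_two]
      have h1 : (a ^^^ c).testBit b' = false := Nat.testBit_lt_two_pow hsz
      rw [Nat.testBit_xor] at h1
      cases h2 : a.testBit b' <;> cases h3 : c.testBit b' <;>
        simp [h2, h3] at h1 ⊢
    have hda : a / 2 ^ b' < 2 := Nat.div_lt_of_lt_mul (by rw [← pow_succ]; omega)
    have hdc : c / 2 ^ b' < 2 := Nat.div_lt_of_lt_mul (by rw [← pow_succ]; omega)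
    have hxmod : (a % 2 ^ b') ^^^ (c % 2 ^ b') = a ^^^ c := by
      rw [mod_xor_mod, Nat.mod_eq_of_lt hsz]
    have hint : b' + 1 - (j + 1) = b' - j := by omega
    obtain ⟨w, hw, heq⟩ := ih b' (a % 2 ^ b') (c % 2 ^ b')
      (Nat.mod_lt _ (by positivity)) (Nat.mod_lt _ (by positivity)) (by omega)
      (by rw [hxmod]; exact lt_of_lt_of_le hd (le_of_eq (by rw [hint])))
    have hmm : ∀ e : ℕ, e % 2 ^ b' % 2 ^ (b' - j) = e % 2 ^ (b' + 1 - (j + 1)) := by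
      intro e
      rw [hint, Nat.mod_mod_of_dvd _ (pow_dvd_pow 2 (by omega))]
    rcases le_or_gt (2 ^ b') a with hge | hlt
    · -- both have top bit 1
      have hcge : 2 ^ b' ≤ c := by
        by_contra hcc
        have h1 : a / 2 ^ b' = 1 := by
          have := Nat.div_le_div_right (c := 2 ^ b') hge
          rw [Nat.div_self (by positivity)] at this
          omega
        have h2 : c / 2 ^ b' = 0 := Nat.div_eq_of_lt (by omega)
        rw [h1, h2] at hbit
        simp at hbit
      have hamod : a % 2 ^ b' = a - 2 ^ b' := by
        rw [Nat.mod_eq_sub_mod hge, Nat.mod_eq_of_lt (by omega)]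
      have hcmod : c % 2 ^ b' = c - 2 ^ b' := by
        rw [Nat.mod_eq_sub_mod hcge, Nat.mod_eq_of_lt (by omega)]
      have hstepa : v ((a : ℝ) / 2 ^ (b' + 1)) = A₁ (v (((a % 2 ^ b' : ℕ) : ℝ) / 2 ^ b')) := by
        have := step1 hv b' (a % 2 ^ b') (Nat.mod_lt _ (by positivity))
        rw [← this]
        congr 2
        push_cast
        rw [hamod]
        push_cast [Nat.cast_sub hge]
        ring
      have hstepc : v ((c : ℝ) / 2 ^ (b' + 1)) = A₁ (v (((c % 2 ^ b' : ℕ) : ℝ) / 2 ^ b')) := by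
        have := step1 hv b' (c % 2 ^ b') (Nat.mod_lt _ (by positivity))
        rw [← this]
        congr 2
        push_cast
        rw [hcmod]
        push_cast [Nat.cast_sub hcge]
        ring
      refine ⟨true :: w, by simp [hw], ?_⟩
      rw [hstepa, hstepc, aff_diff hv, heq]
      simp only [hmm, hint]
      rfl
    · -- both have top bit 0
      have hclt : c < 2 ^ b' := by
        by_contra hcc
        have h1 : c / 2 ^ b' = 1 := by
          have := Nat.div_le_div_right (c := 2 ^ b') (le_of_not_gt hcc)
          rw [Nat.div_self (by positivity)] at this
          omega
        have h2 : a / 2 ^ b' = 0 := Nat.div_eq_of_lt hlt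
        rw [h1, h2] at hbit
        simp at hbit
      have hamod : a % 2 ^ b' = a := Nat.mod_eq_of_lt hlt
      have hcmod : c % 2 ^ b' = c := Nat.mod_eq_of_lt hclt
      have hstepa : v ((a : ℝ) / 2 ^ (b' + 1)) = A₀ (v (((a % 2 ^ b' : ℕ) : ℝ) / 2 ^ b')) := by
        rw [hamod]; exact step0 hv b' a hlt
      have hstepc : v ((c : ℝ) / 2 ^ (b' + 1)) = A₀ (v (((c % 2 ^ b' : ℕ) : ℝ) / 2 ^ b')) := by
        rw [hcmod]; exact step0 hv b' c hclt
      refine ⟨false :: w, by simp [hw], ?_⟩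
      rw [hstepa, hstepc, aff_diff hv, heq]
      simp only [hmm, hint]
      rfl

end Peel

section WordBound

variable {E : Type*} [NormedAddCommGroup E] [NormedSpace ℝ E] (A₀ A₁ : E →L[ℝ] E)

lemma wordProd_append (u t : List Bool) :
    wordProd A₀ A₁ (u ++ t) = (wordProd A₀ A₁ u).comp (wordProd A₀ A₁ t) := by
  induction u with
  | nil => simp [wordProd]
  | cons d u ih =>
    simp only [wordProd, List.foldr_cons, List.foldr_append] at ih ⊢
    rw [ih, ContinuousLinearMap.comp_assoc]

lemma norm_wordProd_le (w : List Bool) :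
    ‖wordProd A₀ A₁ w‖ ≤ (1 + max ‖A₀‖ ‖A₁‖) ^ w.length := by
  induction w with
  | nil => simpa [wordProd] using ContinuousLinearMap.norm_id_le
  | cons d w ih =>
    have h1 : ‖(cond d A₁ A₀ : E →L[ℝ] E)‖ ≤ 1 + max ‖A₀‖ ‖A₁‖ := by
      cases d
      · simp only [cond]
        have := le_max_left ‖A₀‖ ‖A₁‖
        linarith
      · simp only [cond]
        have := le_max_right ‖A₀‖ ‖A₁‖
        linarith
    calc ‖wordProd A₀ A₁ (d :: w)‖ ≤ ‖(cond d A₁ A₀ : E →L[ℝ] E)‖ * ‖wordProd A₀ A₁ w‖ :=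
          ContinuousLinearMap.opNorm_comp_le _ _
      _ ≤ (1 + max ‖A₀‖ ‖A₁‖) * (1 + max ‖A₀‖ ‖A₁‖) ^ w.length := by
          apply mul_le_mul h1 ih (norm_nonneg _)
          positivity
      _ = (1 + max ‖A₀‖ ‖A₁‖) ^ (d :: w).length := by rw [List.length_cons, pow_succ]; ring

lemma list_ofFn_exists (l : List Bool) (n : ℕ) (h : l.length = n) :
    ∃ f : Fin n → Bool, List.ofFn f = l := by
  subst h
  exact ⟨l.get, List.ofFn_get l⟩

lemma word_bound {ρ' : ℝ} (h0 : 0 < ρ') (h1 : ρ' ≤ 1) (h : jsr A₀ A₁ < ρ') :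
    ∃ K : ℝ, 0 < K ∧ ∀ w : List Bool, ‖wordProd A₀ A₁ w‖ ≤ K * ρ' ^ w.length := by
  obtain ⟨r0, hr0⟩ := exists_lt_of_ciInf_lt h
  have hword : ∀ w : List Bool, w.length = r0 + 1 → ‖wordProd A₀ A₁ w‖ ≤ ρ' ^ (r0 + 1) := by
    intro w hw
    obtain ⟨f, rfl⟩ := list_ofFn_exists w (r0 + 1) hw
    have hle : ‖wordProd A₀ A₁ (List.ofFn f)‖ ^ (((r0 : ℝ) + 1)⁻¹) < ρ' :=
      lt_of_le_of_lt (le_ciSup (f := fun g : Fin (r0 + 1) → Bool =>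
        ‖wordProd A₀ A₁ (List.ofFn g)‖ ^ (((r0 : ℝ) + 1)⁻¹))
        (Set.Finite.bddAbove (Set.finite_range _)) f) hr0
    have hnn : (0:ℝ) ≤ ‖wordProd A₀ A₁ (List.ofFn f)‖ := norm_nonneg _
    have hpos : (0:ℝ) < ((r0 : ℝ) + 1)⁻¹ := by positivity
    have hstep := Real.rpow_le_rpow (Real.rpow_nonneg hnn _) hle.le
      (by positivity : (0:ℝ) ≤ (r0:ℝ) + 1)
    rw [← Real.rpow_mul hnn, inv_mul_cancel₀ (by positivity : ((r0:ℝ) + 1) ≠ 0),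
      Real.rpow_one] at hstep
    calc ‖wordProd A₀ A₁ (List.ofFn f)‖ ≤ ρ' ^ ((r0:ℝ) + 1) := hstep
      _ = ρ' ^ (r0 + 1) := by
          rw [← Real.rpow_natCast ρ' (r0 + 1)]
          push_cast
          ring_nf
  set B : ℝ := (1 + max ‖A₀‖ ‖A₁‖) ^ r0 with hB
  have hBpos : 0 < B := by positivity
  have hB1 : (1:ℝ) ≤ 1 + max ‖A₀‖ ‖A₁‖ := by
    have := norm_nonneg A₀
    have := le_max_left ‖A₀‖ ‖A₁‖
    linarith
  refine ⟨B / ρ' ^ r0, by positivity, ?_⟩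
  have main : ∀ k : ℕ, ∀ w : List Bool, w.length = k →
      ‖wordProd A₀ A₁ w‖ ≤ B * ρ' ^ ((r0 + 1) * (k / (r0 + 1))) := by
    intro k
    induction k using Nat.strong_induction_on with
    | _ k ihk =>
      intro w hw
      rcases lt_or_ge k (r0 + 1) with hk | hk
      · have hdiv : k / (r0 + 1) = 0 := Nat.div_eq_of_lt hk
        rw [hdiv, Nat.mul_zero, pow_zero, mul_one]
        calc ‖wordProd A₀ A₁ w‖ ≤ (1 + max ‖A₀‖ ‖A₁‖) ^ w.length := norm_wordProd_le _ _ _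
          _ ≤ B := by
            rw [hB]
            exact pow_le_pow_right₀ hB1 (by omega)
      · have hsplit := wordProd_append A₀ A₁ (w.take (r0 + 1)) (w.drop (r0 + 1))
        rw [List.take_append_drop] at hsplit
        have htl : (w.take (r0 + 1)).length = r0 + 1 := by
          rw [List.length_take, hw]; omega
        have hdl : (w.drop (r0 + 1)).length = k - (r0 + 1) := by
          rw [List.length_drop, hw]
        have h2 := ihk (k - (r0 + 1)) (by omega) (w.drop (r0 + 1)) hdl
        have h3 := hword _ htl
        calc ‖wordProd A₀ A₁ w‖
            ≤ ‖wordProd A₀ A₁ (w.take (r0 + 1))‖ * ‖wordProd A₀ A₁ (w.drop (r0 + 1))‖ := by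
              rw [hsplit]; exact ContinuousLinearMap.opNorm_comp_le _ _
          _ ≤ ρ' ^ (r0 + 1) * (B * ρ' ^ ((r0 + 1) * ((k - (r0 + 1)) / (r0 + 1)))) := by
              apply mul_le_mul h3 h2 (norm_nonneg _) (by positivity)
          _ = B * ρ' ^ ((r0 + 1) * (k / (r0 + 1))) := by
              have hdiv : k / (r0 + 1) = (k - (r0 + 1)) / (r0 + 1) + 1 :=
                Nat.div_eq_sub_div (by omega) hk
              rw [hdiv, Nat.mul_add, Nat.mul_one, pow_add]
              ring
  intro w
  have h4 := main w.length w rfl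
  apply le_trans h4
  rw [div_mul_eq_mul_div, le_div_iff₀ (by positivity), mul_assoc, ← pow_add]
  apply mul_le_mul_of_nonneg_left _ hBpos.le
  apply pow_le_pow_of_le_one h0.le h1
  have h5 := Nat.div_add_mod w.length (r0 + 1)
  have h6 := Nat.mod_lt w.length (show 0 < r0 + 1 by omega)
  omega

end WordBound

section VBound

variable {N : ℕ} {A₀ A₁ : (Fin N → ℝ) →ᵃ[ℝ] (Fin N → ℝ)} {v : ℝ → (Fin N → ℝ)}

noncomputable def vword (A₀ A₁ : (Fin N → ℝ) →ᵃ[ℝ] (Fin N → ℝ)) (x0 : Fin N → ℝ) :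
    List Bool → (Fin N → ℝ)
  | [] => x0
  | d :: w => (cond d A₁ A₀) (vword A₀ A₁ x0 w)

lemma aff_add (A : (Fin N → ℝ) →ᵃ[ℝ] (Fin N → ℝ)) (p q : Fin N → ℝ) :
    A (p + q) = A.linear p + A q := by
  rw [← vadd_eq_add, AffineMap.map_vadd, vadd_eq_add]

lemma vword_eq (x0 : Fin N → ℝ) (w : List Bool) :
    vword A₀ A₁ x0 w = wordProd (LinearMap.toContinuousLinearMap A₀.linear)
      (LinearMap.toContinuousLinearMap A₁.linear) w x0 + vword A₀ A₁ 0 w := by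
  induction w with
  | nil => simp [vword, wordProd]
  | cons d w ih =>
    show (cond d A₁ A₀) (vword A₀ A₁ x0 w) = _ + (cond d A₁ A₀) (vword A₀ A₁ 0 w)
    rw [ih, aff_add]
    cases d <;> rfl

lemma vword_snoc (x0 : Fin N → ℝ) (d : Bool) (w : List Bool) :
    vword A₀ A₁ x0 (w ++ [d]) = vword A₀ A₁ ((cond d A₁ A₀) x0) w := by
  induction w with
  | nil => rfl
  | cons e w ih =>
    show (cond e A₁ A₀) (vword A₀ A₁ x0 (w ++ [d])) = _
    rw [ih]
    rfl

lemma vword_zero_bound {K ρ' : ℝ} (hK : 0 < K) (h0 : 0 < ρ') (h1 : ρ' < 1)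
    (hw : ∀ w : List Bool, ‖wordProd (LinearMap.toContinuousLinearMap A₀.linear)
      (LinearMap.toContinuousLinearMap A₁.linear) w‖ ≤ K * ρ' ^ w.length) :
    ∀ w : List Bool, ‖vword A₀ A₁ 0 w‖ ≤
      K * (max ‖A₀ 0‖ ‖A₁ 0‖) * ∑ i ∈ Finset.range w.length, ρ' ^ i := by
  set S := max ‖A₀ 0‖ ‖A₁ 0‖ with hS
  have hSnn : 0 ≤ S := le_trans (norm_nonneg _) (le_max_left _ _)
  intro w
  induction w using List.reverseRecOn with
  | nil => simp [vword]
  | append_singleton w d ih =>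
    rw [vword_snoc, vword_eq]
    set W := wordProd (LinearMap.toContinuousLinearMap A₀.linear)
      (LinearMap.toContinuousLinearMap A₁.linear) w with hW
    have hterm : ‖W ((cond d A₁ A₀) 0)‖ ≤ K * ρ' ^ w.length * S := by
      have h3 : ‖W ((cond d A₁ A₀) 0)‖ ≤ ‖W‖ * ‖(cond d A₁ A₀) 0‖ :=
        ContinuousLinearMap.le_opNorm _ _
      have h4 : ‖(cond d A₁ A₀) 0‖ ≤ S := by
        cases d
        · exact le_max_left _ _
        · exact le_max_right _ _
      calc ‖W ((cond d A₁ A₀) 0)‖ ≤ ‖W‖ * ‖(cond d A₁ A₀) 0‖ := h3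
        _ ≤ K * ρ' ^ w.length * S :=
            mul_le_mul (hw w) h4 (norm_nonneg _) (by positivity)
    have hnorm : ‖W ((cond d A₁ A₀) 0) + vword A₀ A₁ 0 w‖ ≤
        ‖W ((cond d A₁ A₀) 0)‖ + ‖vword A₀ A₁ 0 w‖ := norm_add_le _ _
    have hlen : (w ++ [d]).length = w.length + 1 := by simp
    rw [hlen, Finset.sum_range_succ]
    calc ‖W ((cond d A₁ A₀) 0) + vword A₀ A₁ 0 w‖
        ≤ (K * ρ' ^ w.length * S) + K * S * ∑ i ∈ Finset.range w.length, ρ' ^ i :=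
          le_trans hnorm (add_le_add hterm ih)
      _ = K * S * (∑ i ∈ Finset.range w.length, ρ' ^ i + ρ' ^ w.length) := by ring

variable (hv : SelfSim A₀ A₁ v)
include hv

lemma expand : ∀ b a : ℕ, a < 2 ^ b → ∃ w : List Bool, w.length = b ∧
    v ((a : ℝ) / 2 ^ b) = vword A₀ A₁ (v 0) w := by
  intro b
  induction b with
  | zero =>
    intro a ha
    interval_cases a
    exact ⟨[], rfl, by norm_num [vword]⟩
  | succ b ih =>
    intro a ha
    rcases lt_or_ge a (2 ^ b) with hlt | hge
    · obtain ⟨w, hwl, hwe⟩ := ih a hlt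
      refine ⟨false :: w, by simp [hwl], ?_⟩
      rw [step0 hv b a hlt, hwe]
      rfl
    · obtain ⟨w, hwl, hwe⟩ := ih (a - 2 ^ b) (by omega)
      refine ⟨true :: w, by simp [hwl], ?_⟩
      have hcast : ((2 ^ b + (a - 2 ^ b) : ℕ) : ℝ) = (a : ℝ) := by
        push_cast [Nat.cast_sub hge]
        ring
      have := step1 hv b (a - 2 ^ b) (by omega)
      rw [hcast] at this
      rw [this, hwe]
      rfl

lemma vbound {K ρ' : ℝ} (hK : 0 < K) (h0 : 0 < ρ') (h1 : ρ' < 1)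
    (hw : ∀ w : List Bool, ‖wordProd (LinearMap.toContinuousLinearMap A₀.linear)
      (LinearMap.toContinuousLinearMap A₁.linear) w‖ ≤ K * ρ' ^ w.length) :
    ∀ b a : ℕ, a < 2 ^ b → ‖v ((a : ℝ) / 2 ^ b)‖ ≤
      K * ‖v 0‖ + K * (max ‖A₀ 0‖ ‖A₁ 0‖) * (1 / (1 - ρ')) := by
  intro b a ha
  obtain ⟨w, hwl, hwe⟩ := expand hv b a ha
  rw [hwe, vword_eq]
  set S := max ‖A₀ 0‖ ‖A₁ 0‖ with hS
  set W := wordProd (LinearMap.toContinuousLinearMap A₀.linear)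
    (LinearMap.toContinuousLinearMap A₁.linear) w with hW
  have hSnn : 0 ≤ S := le_trans (norm_nonneg _) (le_max_left _ _)
  have hsum : ∑ i ∈ Finset.range w.length, ρ' ^ i ≤ 1 / (1 - ρ') := by
    rw [geom_sum_eq (ne_of_lt h1)]
    have heq2 : (ρ' ^ w.length - 1) / (ρ' - 1) = (1 - ρ' ^ w.length) / (1 - ρ') := by
      rw [← neg_div_neg_eq]
      congr 1 <;> ring
    rw [heq2]
    have h2 : (0:ℝ) ≤ ρ' ^ w.length := by positivity
    gcongr
    · linarith
  have hterm : ‖W (v 0)‖ ≤ K * ρ' ^ w.length * ‖v 0‖ :=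
    le_trans (ContinuousLinearMap.le_opNorm _ _)
      (mul_le_mul_of_nonneg_right (hw w) (norm_nonneg _))
  have hpow1 : ρ' ^ w.length ≤ 1 := pow_le_one₀ h0.le h1.le
  calc ‖W (v 0) + vword A₀ A₁ 0 w‖ ≤ ‖W (v 0)‖ + ‖vword A₀ A₁ 0 w‖ := norm_add_le _ _
    _ ≤ K * ρ' ^ w.length * ‖v 0‖ + K * S * ∑ i ∈ Finset.range w.length, ρ' ^ i :=
        add_le_add hterm (vword_zero_bound hK h0 h1 hw w)
    _ ≤ K * ‖v 0‖ + K * S * (1 / (1 - ρ')) := by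
        apply add_le_add
        · nlinarith [mul_nonneg (mul_nonneg hK.le (sub_nonneg.mpr hpow1)) (norm_nonneg (v 0))]
        · exact mul_le_mul_of_nonneg_left hsum (by positivity)

end VBound


end Aux

/-- For dyadic rationals `x < y` in `(0,1)` and a `W`-continuous solution `v`
of the dyadic self-similarity equation with operators of joint spectral radius
`ρ < 1`, for every `ε > 0` with `ρ + ε < 1` there is a constant `C` with
`‖v(y) − v(x)‖ ≤ C |y ⊖ x|^{−log₂(ρ + ε)}`. -/
theorem fractal_curve_holder_estimate {N : ℕ}
    (A₀ A₁ : (Fin N → ℝ) →ᵃ[ℝ] (Fin N → ℝ))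
    (hρ : jsrAff A₀ A₁ < 1)
    (v : ℝ → (Fin N → ℝ)) (hv : SelfSim A₀ A₁ v) (hW : WContV v)
    (ε : ℝ) (hε : 0 < ε) (hρε : jsrAff A₀ A₁ + ε < 1) :
    ∃ C : ℝ, ∀ x y : ℝ, DyadicRat x → DyadicRat y →
      0 < x → x < y → y < 1 →
      ‖v y - v x‖ ≤ C * (dAdd y x) ^ (-Real.logb 2 (jsrAff A₀ A₁ + ε)) := by
  classical
  have hjnn : 0 ≤ jsrAff A₀ A₁ := le_ciInf fun r => Real.iSup_nonneg fun w => Real.rpow_nonneg (norm_nonneg _) _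
  set ρ' := jsrAff A₀ A₁ + ε with hρ'def
  have hρ'0 : 0 < ρ' := by positivity
  have hρ'1 : ρ' < 1 := hρε
  have hjlt : jsr (LinearMap.toContinuousLinearMap A₀.linear)
      (LinearMap.toContinuousLinearMap A₁.linear) < ρ' := by
    have : jsrAff A₀ A₁ < ρ' := by rw [hρ'def]; linarith
    exact this
  obtain ⟨K, hK, hKw⟩ := word_bound _ _ hρ'0 hρ'1.le hjlt
  have hMb := vbound hv hK hρ'0 hρ'1 hKw
  set M := K * ‖v 0‖ + K * (max ‖A₀ 0‖ ‖A₁ 0‖) * (1 / (1 - ρ')) with hMdef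
  have hM0 : 0 ≤ M := le_trans (norm_nonneg _) (hMb 0 0 (by norm_num))
  set α := -Real.logb 2 ρ' with hαdef
  have hα : 0 ≤ α := by
    have := Real.logb_nonpos (by norm_num : (1:ℝ) < 2) hρ'0.le hρ'1.le
    rw [hαdef]; linarith
  refine ⟨2 * M * K / ρ', ?_⟩
  rintro x y ⟨p₁, b₁, rfl⟩ ⟨q₁, b₂, rfl⟩ hx0 hxy hy1
  set b := max b₁ b₂ with hbdef
  have hxe : (p₁ : ℝ) / 2 ^ b₁ = ((p₁ * 2 ^ (b - b₁) : ℕ) : ℝ) / 2 ^ b := by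
    have h2b : (2:ℝ) ^ b = 2 ^ b₁ * 2 ^ (b - b₁) := by
      rw [← pow_add]; congr 1; omega
    push_cast
    rw [h2b, mul_div_mul_right _ _ (by positivity : (0:ℝ) < 2 ^ (b - b₁)).ne']
  have hye : (q₁ : ℝ) / 2 ^ b₂ = ((q₁ * 2 ^ (b - b₂) : ℕ) : ℝ) / 2 ^ b := by
    have h2b : (2:ℝ) ^ b = 2 ^ b₂ * 2 ^ (b - b₂) := by
      rw [← pow_add]; congr 1; omega
    push_cast
    rw [h2b, mul_div_mul_right _ _ (by positivity : (0:ℝ) < 2 ^ (b - b₂)).ne']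
  set p := p₁ * 2 ^ (b - b₁) with hpdef
  set q := q₁ * 2 ^ (b - b₂) with hqdef
  rw [hxe] at hx0 hxy ⊢
  rw [hye] at hxy hy1 ⊢
  have h2bpos : (0:ℝ) < 2 ^ b := by positivity
  have hq2 : q < 2 ^ b := by
    rw [div_lt_one h2bpos] at hy1
    exact_mod_cast hy1
  have hpq : p < q := by
    rw [div_lt_div_iff₀ h2bpos h2bpos] at hxy
    have := lt_of_mul_lt_mul_right hxy h2bpos.le
    exact_mod_cast this
  have hp2 : p < 2 ^ b := by omega
  have hne : q ^^^ p ≠ 0 := by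
    simp only [ne_eq, xor_eq_zero_iff]; omega
  set m := Nat.size (q ^^^ p) with hmdef
  have hm1 : 1 ≤ m := Nat.size_pos.mpr (Nat.pos_of_ne_zero hne)
  have hmb : m ≤ b := Nat.size_le.mpr (Nat.xor_lt_two_pow hq2 hp2)
  obtain ⟨w, hwl, hwe⟩ := peel hv (b - m) b q p hq2 hp2 (by omega)
    (by rw [show b - (b - m) = m by omega]; exact Nat.lt_size_self _)
  rw [show b - (b - m) = m by omega] at hwe
  have hdd : dAdd (((q:ℕ) : ℝ) / 2 ^ b) (((p:ℕ) : ℝ) / 2 ^ b)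
      = ((q ^^^ p : ℕ) : ℝ) / 2 ^ b := dAdd_dyadic q p b
  rw [hdd]
  have hΔ : ‖v (((q % 2 ^ m : ℕ) : ℝ) / 2 ^ m) - v (((p % 2 ^ m : ℕ) : ℝ) / 2 ^ m)‖
      ≤ 2 * M := by
    calc ‖v (((q % 2 ^ m : ℕ) : ℝ) / 2 ^ m) - v (((p % 2 ^ m : ℕ) : ℝ) / 2 ^ m)‖
        ≤ ‖v (((q % 2 ^ m : ℕ) : ℝ) / 2 ^ m)‖ + ‖v (((p % 2 ^ m : ℕ) : ℝ) / 2 ^ m)‖ :=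
          norm_sub_le _ _
      _ ≤ M + M := add_le_add (hMb m _ (Nat.mod_lt _ (by positivity)))
          (hMb m _ (Nat.mod_lt _ (by positivity)))
      _ = 2 * M := by ring
  have hmain : ‖v (((q:ℕ) : ℝ) / 2 ^ b) - v (((p:ℕ) : ℝ) / 2 ^ b)‖
      ≤ K * ρ' ^ (b - m) * (2 * M) := by
    rw [hwe]
    calc ‖wordProd (LinearMap.toContinuousLinearMap A₀.linear)
          (LinearMap.toContinuousLinearMap A₁.linear) w
          (v (((q % 2 ^ m : ℕ) : ℝ) / 2 ^ m) - v (((p % 2 ^ m : ℕ) : ℝ) / 2 ^ m))‖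
        ≤ ‖wordProd (LinearMap.toContinuousLinearMap A₀.linear)
            (LinearMap.toContinuousLinearMap A₁.linear) w‖ *
          ‖v (((q % 2 ^ m : ℕ) : ℝ) / 2 ^ m) - v (((p % 2 ^ m : ℕ) : ℝ) / 2 ^ m)‖ :=
          ContinuousLinearMap.le_opNorm _ _
      _ ≤ (K * ρ' ^ w.length) * (2 * M) :=
          mul_le_mul (hKw w) hΔ (norm_nonneg _) (by positivity)
      _ = K * ρ' ^ (b - m) * (2 * M) := by rw [hwl]
  -- lower bound for the dyadic distance
  have hd2 : (2:ℝ) ^ (m - 1) ≤ ((q ^^^ p : ℕ) : ℝ) := by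
    have := Nat.lt_size.mp (show m - 1 < m by omega)
    exact_mod_cast this
  have hXge : (2:ℝ) ^ (m - 1) / 2 ^ b ≤ ((q ^^^ p : ℕ) : ℝ) / 2 ^ b := by gcongr
  set z : ℝ := ((m - 1 : ℕ) : ℝ) - (b : ℝ) with hzdef
  have hzeq : (2:ℝ) ^ (m - 1) / 2 ^ b = (2:ℝ) ^ z := by
    rw [hzdef, Real.rpow_sub two_pos, Real.rpow_natCast, Real.rpow_natCast]
  have h1 : ((2:ℝ) ^ z) ^ α ≤ (((q ^^^ p : ℕ) : ℝ) / 2 ^ b) ^ α :=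
    Real.rpow_le_rpow (by positivity) (hzeq ▸ hXge) hα
  have h2 : ((2:ℝ) ^ z) ^ α = ρ' ^ (b + 1 - m) := by
    rw [← Real.rpow_mul (by norm_num : (0:ℝ) ≤ 2)]
    have hza : z * α = Real.logb 2 ρ' * ((b + 1 - m : ℕ) : ℝ) := by
      rw [hzdef, hαdef]
      push_cast [Nat.cast_sub hm1, Nat.cast_sub (show m ≤ b + 1 by omega)]
      ring
    rw [hza, Real.rpow_mul (by norm_num : (0:ℝ) ≤ 2),
      Real.rpow_logb two_pos (by norm_num : (2:ℝ) ≠ 1) hρ'0,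
      Real.rpow_natCast]
  calc ‖v (((q:ℕ) : ℝ) / 2 ^ b) - v (((p:ℕ) : ℝ) / 2 ^ b)‖
      ≤ K * ρ' ^ (b - m) * (2 * M) := hmain
    _ = (2 * M * K / ρ') * ρ' ^ (b + 1 - m) := by
        rw [show b + 1 - m = (b - m) + 1 by omega, pow_succ]
        field_simp
    _ ≤ (2 * M * K / ρ') * ((((q ^^^ p : ℕ) : ℝ) / 2 ^ b) ^ α) := by
        apply mul_le_mul_of_nonneg_left _ (by positivity)
        rw [← h2]
        exact h1
end

section
/- Let A be a column-stochastic N×N matrix having at least one row all of whose entries are positive. Then there exists q ∈ (0,1) such that for all x, y in the unit simplex Δ = {x ∈ ℝ^N : x ≥ 0, Σᵢ xᵢ = 1}, one has ‖Ax − Ay‖₁ ≤ q ‖x − y‖₁. Moreover one may take q = 1 − m, where m > 0 is the minimal entry of the positive row. -/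
lemma abs_sub_eq_add_sub_two_min (a b : ℝ) : |a - b| = a + b - 2 * min a b := by
  rcases le_total a b with h | h
  · rw [min_eq_left h, abs_of_nonpos (by linarith)]; ring
  · rw [min_eq_right h, abs_of_nonneg (by linarith)]; ring

/-- A column-stochastic matrix with a strictly positive row contracts the
`ℓ¹`-distance on the unit simplex, with factor `q = 1 − m` where `m` is the
minimal entry of the positive row. -/
theorem stochastic_with_positive_row_contracts (N : ℕ)
    (A : Matrix (Fin N) (Fin N) ℝ)
    (hnn : ∀ i j, 0 ≤ A i j) (hcol : ∀ j, ∑ i, A i j = 1)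
    (i₀ : Fin N) (hrow : ∀ j, 0 < A i₀ j) :
    (∃ q : ℝ, 0 < q ∧ q < 1 ∧
      ∀ x y : Fin N → ℝ,
        (∀ i, 0 ≤ x i) → ∑ i, x i = 1 → (∀ i, 0 ≤ y i) → ∑ i, y i = 1 →
        ∑ i, |A.mulVec x i - A.mulVec y i| ≤ q * ∑ i, |x i - y i|) ∧
    (∀ x y : Fin N → ℝ,
      (∀ i, 0 ≤ x i) → ∑ i, x i = 1 → (∀ i, 0 ≤ y i) → ∑ i, y i = 1 →
      ∑ i, |A.mulVec x i - A.mulVec y i| ≤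
        (1 - Finset.univ.inf' ⟨i₀, Finset.mem_univ i₀⟩ (A i₀)) *
          ∑ i, |x i - y i|) := by
  set m : ℝ := Finset.univ.inf' ⟨i₀, Finset.mem_univ i₀⟩ (A i₀) with hm
  have hm0 : 0 < m := by
    rw [hm]; exact (Finset.lt_inf'_iff _).2 fun j _ => hrow j
  have hm_le : ∀ j, m ≤ A i₀ j := fun j => Finset.inf'_le _ (Finset.mem_univ j)
  have hm1 : m ≤ 1 := by
    have h1 := hm_le i₀
    have h2 : A i₀ i₀ ≤ 1 := by
      rw [← hcol i₀]
      exact Finset.single_le_sum (fun i _ => hnn i i₀) (Finset.mem_univ i₀)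
    linarith
  have key : ∀ x y : Fin N → ℝ,
      (∀ i, 0 ≤ x i) → ∑ i, x i = 1 → (∀ i, 0 ≤ y i) → ∑ i, y i = 1 →
      ∑ i, |A.mulVec x i - A.mulVec y i| ≤ (1 - m) * ∑ i, |x i - y i| := by
    intro x y hx hxs hy hys
    set u : Fin N → ℝ := fun j => max (x j - y j) 0 with hu
    set v : Fin N → ℝ := fun j => max (-(x j - y j)) 0 with hv
    have hu0 : ∀ j, 0 ≤ u j := fun j => le_max_right _ _
    have hv0 : ∀ j, 0 ≤ v j := fun j => le_max_right _ _
    have huv : ∀ j, x j - y j = u j - v j := fun j =>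
      (max_zero_sub_max_neg_zero_eq_self (x j - y j)).symm
    have habs : ∀ j, |x j - y j| = u j + v j := fun j =>
      (max_zero_add_max_neg_zero_eq_abs_self (x j - y j)).symm
    set s : ℝ := ∑ j, u j with hs
    have hvs : ∑ j, v j = s := by
      have h0 : ∑ j, (x j - y j) = 0 := by
        rw [Finset.sum_sub_distrib, hxs, hys]; ring
      have h1 : ∑ j, (u j - v j) = 0 := by
        rw [← h0]; exact Finset.sum_congr rfl fun j _ => (huv j).symm
      rw [Finset.sum_sub_distrib] at h1
      rw [hs]; linarith
    have hs0 : 0 ≤ s := Finset.sum_nonneg fun j _ => hu0 j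
    set P : Fin N → ℝ := fun i => ∑ j, A i j * u j with hP
    set Q : Fin N → ℝ := fun i => ∑ j, A i j * v j with hQ
    have hP0 : ∀ i, 0 ≤ P i := fun i =>
      Finset.sum_nonneg fun j _ => mul_nonneg (hnn i j) (hu0 j)
    have hQ0 : ∀ i, 0 ≤ Q i := fun i =>
      Finset.sum_nonneg fun j _ => mul_nonneg (hnn i j) (hv0 j)
    have hPsum : ∑ i, P i = s := by
      rw [hP, Finset.sum_comm]
      rw [hs]
      refine Finset.sum_congr rfl fun j _ => ?_
      rw [← Finset.sum_mul, hcol j, one_mul]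
    have hQsum : ∑ i, Q i = s := by
      rw [hQ, Finset.sum_comm, ← hvs]
      refine Finset.sum_congr rfl fun j _ => ?_
      rw [← Finset.sum_mul, hcol j, one_mul]
    have hmv : ∀ i, A.mulVec x i - A.mulVec y i = P i - Q i := by
      intro i
      simp only [Matrix.mulVec, dotProduct, hP, hQ, ← Finset.sum_sub_distrib]
      refine Finset.sum_congr rfl fun j _ => ?_
      rw [← mul_sub, ← mul_sub, ← huv j]
    have hPi₀ : m * s ≤ P i₀ := by
      rw [hs, Finset.mul_sum]
      exact Finset.sum_le_sum fun j _ =>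
        mul_le_mul_of_nonneg_right (hm_le j) (hu0 j)
    have hQi₀ : m * s ≤ Q i₀ := by
      rw [← hvs, Finset.mul_sum]
      exact Finset.sum_le_sum fun j _ =>
        mul_le_mul_of_nonneg_right (hm_le j) (hv0 j)
    have hmin : m * s ≤ ∑ i, min (P i) (Q i) := by
      calc m * s ≤ min (P i₀) (Q i₀) := le_min hPi₀ hQi₀
        _ ≤ ∑ i, min (P i) (Q i) :=
          Finset.single_le_sum (fun i _ => le_min (hP0 i) (hQ0 i))
            (Finset.mem_univ i₀)
    have hsum_abs : ∑ i, |x i - y i| = 2 * s := by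
      rw [show (2:ℝ) * s = s + s by ring]
      nth_rewrite 2 [← hvs]
      rw [hs, ← Finset.sum_add_distrib]
      exact Finset.sum_congr rfl fun j _ => habs j
    calc ∑ i, |A.mulVec x i - A.mulVec y i|
        = ∑ i, (P i + Q i - 2 * min (P i) (Q i)) := by
          refine Finset.sum_congr rfl fun i _ => ?_
          rw [hmv i, abs_sub_eq_add_sub_two_min]
      _ = (∑ i, P i) + (∑ i, Q i) - 2 * ∑ i, min (P i) (Q i) := by
          rw [Finset.sum_sub_distrib, Finset.sum_add_distrib, Finset.mul_sum]
      _ ≤ s + s - 2 * (m * s) := by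
          rw [hPsum, hQsum]; nlinarith [hmin]
      _ = (1 - m) * (2 * s) := by ring
      _ = (1 - m) * ∑ i, |x i - y i| := by rw [hsum_abs]
  refine ⟨⟨1 - m / 2, by linarith, by linarith, fun x y hx hxs hy hys => ?_⟩, key⟩
  calc ∑ i, |A.mulVec x i - A.mulVec y i| ≤ (1 - m) * ∑ i, |x i - y i| :=
        key x y hx hxs hy hys
    _ ≤ (1 - m / 2) * ∑ i, |x i - y i| := by
        apply mul_le_mul_of_nonneg_right (by linarith)
        exact Finset.sum_nonneg fun i _ => abs_nonneg _
end
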